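/- With A, g, h as above and n ≥ 1, suppose g·A·h⁻¹ equals the matrix N with 1's on the diagonal, −1's on the subdiagonal (positions (i,i−1) for 1 ≤ i ≤ n), and zeros elsewhere, and suppose all f_i ≠ 0. Then a = b₀, b_i = b₀/f_i and a_{ii} = b₀/f_i for 1 ≤ i ≤ n, a_{i,i−1} = −b₀/f_{i−1} for 2 ≤ i ≤ n, and all other a_{ij} (j ∉ {i−1, i}) vanish. -/
import Mathlib


open Matrix Finset

/-- The matrix `A` with 1's on the diagonal, first column `(1, -f₁, …, -f_n)ᵀ`
and zeros elsewhere. -/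
def Amat {n : ℕ} (fv : Fin n → ℝ) : Matrix (Fin (n + 1)) (Fin (n + 1)) ℝ :=
  Matrix.of fun i j =>
    (if i = j then (1 : ℝ) else 0) +
      (if j = 0 then Fin.cases 0 (fun k => -fv k) i else 0)

/-- The block-diagonal matrix `g = diag(a, (aM i j))`. -/
def gmat {n : ℕ} (a : ℝ) (aM : Matrix (Fin n) (Fin n) ℝ) :
    Matrix (Fin (n + 1)) (Fin (n + 1)) ℝ :=
  Matrix.of fun i j =>
    Fin.cases (Fin.cases a (fun _ => 0) j) (fun k => Fin.cases 0 (fun l => aM k l) j) i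

/-- The matrix `N` with 1's on the diagonal, `-1`'s on the subdiagonal, zeros elsewhere. -/
def Nmat (n : ℕ) : Matrix (Fin (n + 1)) (Fin (n + 1)) ℝ :=
  Matrix.of fun i j =>
    if i = j then (1 : ℝ) else if (i : ℕ) = (j : ℕ) + 1 then -1 else 0

/-- Normalization of the zeroth-order invariants: if `g·A·h⁻¹ = N` then
`a = b₀`, `b_i = b₀/f_i = a_{ii}`, `a_{i,i-1} = -b₀/f_{i-1}` and all
other `a_{ij}` vanish.  (Here `aM p q` is the paper's `a_{p+1,q+1}` and
`fv p` is the paper's `f_{p+1}`.) -/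
theorem stmt6 {n : ℕ} (hn : 1 ≤ n) (fv : Fin n → ℝ) (hfv : ∀ i, fv i ≠ 0)
    (a : ℝ) (ha : a ≠ 0)
    (aM : Matrix (Fin n) (Fin n) ℝ) (haM : IsUnit aM)
    (b : Fin (n + 1) → ℝ) (hb : ∀ i, b i ≠ 0)
    (hN : gmat a aM * Amat fv * (Matrix.diagonal b)⁻¹ = Nmat n) :
    a = b 0 ∧
    (∀ i : Fin n, b i.succ = b 0 / fv i) ∧
    (∀ i : Fin n, aM i i = b 0 / fv i) ∧
    (∀ i j : Fin n, (i : ℕ) = (j : ℕ) + 1 → aM i j = -b 0 / fv j) ∧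
    (∀ i j : Fin n, i ≠ j → (i : ℕ) ≠ (j : ℕ) + 1 → aM i j = 0) := by

  have hdet : IsUnit (Matrix.diagonal b).det := by
    rw [Matrix.det_diagonal]
    exact (Finset.prod_ne_zero_iff.mpr fun i _ => hb i).isUnit
  have key : gmat a aM * Amat fv = Nmat n * Matrix.diagonal b := by
    have h1 : (Matrix.diagonal b)⁻¹ * Matrix.diagonal b = 1 := Matrix.nonsing_inv_mul _ hdet
    have h2 := congrArg (fun M => M * Matrix.diagonal b) hN
    simpa [mul_assoc, h1] using h2
  have keyE : ∀ i j, (gmat a aM * Amat fv) i j = (Nmat n * Matrix.diagonal b) i j := by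
    intro i j; rw [key]
  have hab : a = b 0 := by
    have h := keyE 0 0
    simp [Matrix.mul_apply, Matrix.mul_diagonal, Amat, gmat, Nmat, Fin.sum_univ_succ] at h
    exact h
  have haM' : ∀ p q : Fin n, aM p q =
      if p = q then b q.succ else if (p:ℕ) = (q:ℕ)+1 then -b q.succ else 0 := by
    intro p q
    have h := keyE p.succ q.succ
    rw [Matrix.mul_diagonal] at h
    simp [Matrix.mul_apply, Amat, gmat, Nmat, Fin.sum_univ_succ,
      (Fin.succ_ne_zero _), mul_ite, Finset.sum_ite_eq', Fin.succ_inj] at h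
    rw [h]
  have hS : ∀ p : Fin n, ∑ r, aM p r * fv r = if (p:ℕ) = 0 then b 0 else 0 := by
    intro p
    have h := keyE p.succ 0
    simp [Matrix.mul_apply, Matrix.mul_diagonal, Amat, gmat, Nmat, Fin.sum_univ_succ,
      (Fin.succ_ne_zero _)] at h
    split_ifs at h ⊢ <;> linarith
  have hterm : ∀ p r : Fin n, aM p r * fv r =
      (if p = r then b r.succ * fv r else 0) +
      (if (p:ℕ) = (r:ℕ)+1 then -(b r.succ * fv r) else 0) := by
    intro p r
    rcases eq_or_ne p r with h|h
    · subst h; rw [haM', if_pos rfl, if_pos rfl, if_neg (by omega)]; ring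
    · rw [haM', if_neg h, if_neg h]
      by_cases h2 : (p:ℕ) = (r:ℕ)+1
      · rw [if_pos h2, if_pos h2]; ring
      · rw [if_neg h2, if_neg h2]; ring
  have hsum2 : ∀ p : Fin n, ∑ r, aM p r * fv r =
      b p.succ * fv p + ∑ r : Fin n, (if (p:ℕ) = (r:ℕ)+1 then -(b r.succ * fv r) else 0) := by
    intro p
    simp only [hterm, Finset.sum_add_distrib, Finset.sum_ite_eq, Finset.mem_univ, if_true]
  have hmain : ∀ m (hm : m < n), b (Fin.succ ⟨m, hm⟩) * fv ⟨m, hm⟩ = b 0 := by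
    intro m
    induction m with
    | zero =>
      intro hm
      have h := hS ⟨0, hm⟩
      rw [hsum2] at h
      rw [Finset.sum_eq_zero (fun r _ => by simp)] at h
      simpa using h
    | succ k ih =>
      intro hm
      have hk : k < n := Nat.lt_of_succ_lt hm
      have h := hS ⟨k+1, hm⟩
      rw [hsum2] at h
      have h2 : ∑ r : Fin n, (if ((⟨k+1,hm⟩:Fin n):ℕ) = (r:ℕ)+1 then -(b r.succ * fv r) else 0)
          = -(b (Fin.succ ⟨k,hk⟩) * fv ⟨k,hk⟩) := by
        rw [Finset.sum_eq_single (⟨k,hk⟩ : Fin n)]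
        · simp
        · intro r _ hr
          rw [if_neg]
          intro hc
          apply hr
          apply Fin.ext
          simp only [Fin.val_mk] at hc ⊢
          omega
        · simp
      rw [h2, ih hk] at h
      rw [if_neg (by simp)] at h
      linarith
  have hb' : ∀ i : Fin n, b i.succ = b 0 / fv i := by
    intro i
    have h := hmain i.val i.isLt
    rw [eq_div_iff (hfv i)]
    exact h
  refine ⟨hab, hb', ?_, ?_, ?_⟩
  · intro i
    rw [haM' i i, if_pos rfl, hb' i]
  · intro i j hij
    have hne : i ≠ j := by intro h; subst h; omega
    rw [haM' i j, if_neg hne, if_pos hij, hb' j, neg_div]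
  · intro i j h1 h2
    rw [haM' i j, if_neg h1, if_neg h2]
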